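/- (Converged block count, Lemma 4 conditional form.) There exists a constant c > 0 such that the following holds. Let λ > 0, Δ ≥ 0, and let X₁, …, X_{n+1} be i.i.d. exponential random variables with rate λ. Set η = e^{−2λΔ}, and for i ∈ {1, …, n} let Y_i be the indicator of the event {X_i ≥ 2Δ and X_{i+1} ≥ 2Δ} (so P(Y_i = 1) = η²), and Y = Σ_{i=1}^n Y_i. Then for every δ with 0 < δ < 1, P(Y ≤ (1−δ)·η²·n) ≤ 2·exp(−c·δ²·η²·n). -/

import Mathlib

open MeasureTheory ProbabilityTheory Finset Real

/-- Scalar inequality for the Chernoff exponent. -/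
lemma cbc_exp_quad {δ : ℝ} (h0 : 0 < δ) (h1 : δ ≤ 1) :
    δ * (1 - δ) + Real.exp (-δ) - 1 ≤ -(5/18) * δ^2 := by
  have hb := Real.exp_bound (x := -δ) (by rwa [abs_neg, abs_of_pos h0]) (n := 3) (by norm_num)
  have hs : ∑ i ∈ Finset.range 3, (-δ)^i / (Nat.factorial i) = 1 - δ + δ^2/2 := by
    simp [Finset.sum_range_succ, Nat.factorial]
    ring
  rw [hs] at hb
  rw [abs_neg, abs_of_pos h0] at hb
  norm_num [Nat.factorial] at hb
  have hcube : δ^3 ≤ δ^2 := by nlinarith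
  have := abs_le.1 hb
  nlinarith [this.1, this.2]

/-- Tail of the exponential distribution. -/
lemma cbc_expMeasure_Ici {r : ℝ} (hr : 0 < r) {a : ℝ} (ha : 0 ≤ a) :
    expMeasure r (Set.Ici a) = ENNReal.ofReal (Real.exp (-(r * a))) := by
  haveI : IsProbabilityMeasure (expMeasure r) := isProbabilityMeasure_expMeasure hr
  have hIic : expMeasure r (Set.Iic a) = ENNReal.ofReal (1 - Real.exp (-(r * a))) := by
    have : expMeasure r (Set.Iic a) = ∫⁻ y in Set.Iic a, exponentialPDF r y := by
      rw [expMeasure, gammaMeasure, withDensity_apply _ measurableSet_Iic]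
      rfl
    rw [this, lintegral_exponentialPDF_eq_antiDeriv hr a, if_pos ha]
  have hsingleton : expMeasure r {a} = 0 := by
    rw [expMeasure, gammaMeasure, withDensity_apply _ (measurableSet_singleton a)]
    rw [setLIntegral_measure_zero _ _ (measure_singleton a)]
  have hIoi : expMeasure r (Set.Ioi a) = ENNReal.ofReal (Real.exp (-(r * a))) := by
    have hcompl := prob_compl_eq_one_sub (μ := expMeasure r) (measurableSet_Iic (a := a))
    rw [Set.compl_Iic, hIic] at hcompl
    have hle : Real.exp (-(r * a)) ≤ 1 := Real.exp_le_one_iff.2 (by nlinarith)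
    rw [hcompl, ← ENNReal.ofReal_one, ← ENNReal.ofReal_sub 1 (sub_nonneg.2 hle)]
    norm_num
  have hset : Set.Ici a = {a} ∪ Set.Ioi a := by
    ext x
    simp only [Set.mem_Ici, Set.mem_union, Set.mem_singleton_iff, Set.mem_Ioi]
    constructor
    · intro h; rcases eq_or_lt_of_le h with h' | h'
      · exact Or.inl h'.symm
      · exact Or.inr h'
    · rintro (rfl | h) <;> [exact le_rfl; exact h.le]
  rw [hset, measure_union (Set.disjoint_singleton_left.2 (by simp)) measurableSet_Ioi,
    hsingleton, hIoi, zero_add]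

/-- Independence of well-separated pair events. -/
lemma cbc_iIndepSet_pairs {n k : ℕ} {Ω : Type} [MeasurableSpace Ω] {μ : Measure Ω}
    {X : Fin (n+1) → Ω → ℝ} (hXm : ∀ i, Measurable (X i))
    (hX : iIndepFun X μ) (a : ℝ)
    (g : Fin k → Fin n)
    (hsep : ∀ j l, j ≠ l → (g j : ℕ) + 2 ≤ (g l : ℕ) ∨ (g l : ℕ) + 2 ≤ (g j : ℕ)) :
    iIndepSet (fun j => (X (g j).castSucc ⁻¹' Set.Ici a) ∩ (X (g j).succ ⁻¹' Set.Ici a)) μ := by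
  classical
  set B : Fin (n+1) → Set Ω := fun i => X i ⁻¹' Set.Ici a with hB
  have hBm : ∀ i, MeasurableSet (B i) := fun i => (hXm i) measurableSet_Ici
  have key : ∀ S : Finset (Fin (n+1)), μ (⋂ i ∈ S, B i) = ∏ i ∈ S, μ (B i) :=
    fun S => hX.meas_biInter (fun i _ => ⟨Set.Ici a, measurableSet_Ici, rfl⟩)
  have hpairprod : ∀ j : Fin n, μ (B j.castSucc ∩ B j.succ) = μ (B j.castSucc) * μ (B j.succ) := by
    intro j
    have hne : j.castSucc ≠ j.succ := by
      intro h
      have := congrArg Fin.val h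
      simp [Fin.val_succ] at this
    have h1 : (⋂ i ∈ ({j.castSucc, j.succ} : Finset (Fin (n+1))), B i)
        = B j.castSucc ∩ B j.succ := by
      simp [Set.biInter_insert]
    have h2 := key ({j.castSucc, j.succ} : Finset (Fin (n+1)))
    rw [h1, Finset.prod_insert (by simpa using hne), Finset.prod_singleton] at h2
    exact h2
  rw [iIndepSet_iff_meas_biInter (fun j => (hBm _).inter (hBm _))]
  intro T
  set P : Fin k → Finset (Fin (n+1)) := fun j => {(g j).castSucc, (g j).succ} with hP
  have hdisj : (T : Set (Fin k)).PairwiseDisjoint P := by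
    intro j hj l hl hjl
    have h := hsep j l hjl
    simp only [Function.onFun]
    rw [Finset.disjoint_left]
    intro i hi1 hi2
    simp only [hP, Finset.mem_insert, Finset.mem_singleton] at hi1 hi2
    have e1 : (g j).castSucc.val = (g j : ℕ) := rfl
    have e2 : (g j).succ.val = (g j : ℕ) + 1 := rfl
    have e3 : (g l).castSucc.val = (g l : ℕ) := rfl
    have e4 : (g l).succ.val = (g l : ℕ) + 1 := rfl
    rcases hi1 with rfl | rfl <;> rcases hi2 with h5 | h5 <;>
      · have := congrArg Fin.val h5
        omega
  have hunion : (⋂ j ∈ T, (B (g j).castSucc ∩ B (g j).succ)) = ⋂ i ∈ T.biUnion P, B i := by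
    ext ω
    simp only [Set.mem_iInter, Set.mem_inter_iff, Finset.mem_biUnion, hP, Finset.mem_insert,
      Finset.mem_singleton]
    constructor
    · rintro h i ⟨j, hj, rfl | rfl⟩
      · exact (h j hj).1
      · exact (h j hj).2
    · intro h j hj
      exact ⟨h _ ⟨j, hj, Or.inl rfl⟩, h _ ⟨j, hj, Or.inr rfl⟩⟩
  rw [hunion, key, Finset.prod_biUnion hdisj]
  refine Finset.prod_congr rfl (fun j hj => ?_)
  rw [hP]
  have hne : (g j).castSucc ≠ (g j).succ := by
    intro h
    have := congrArg Fin.val h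
    simp [Fin.val_succ] at this
  rw [Finset.prod_insert (by simpa using hne), Finset.prod_singleton, ← hpairprod]
/-- Chernoff lower-tail bound for independent indicator events. -/
lemma cbc_chernoff {Ω : Type} [MeasurableSpace Ω] (μ : Measure Ω) [IsProbabilityMeasure μ]
    {k : ℕ} (A : Fin k → Set Ω) (hA : ∀ j, MeasurableSet (A j)) (hind : iIndepSet A μ)
    (p : ℝ) (hp0 : 0 ≤ p) (hp1 : p ≤ 1) (hp : ∀ j, μ (A j) = ENNReal.ofReal p)
    (δ : ℝ) (hδ0 : 0 < δ) (hδ1 : δ < 1) :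
    μ {ω | (∑ j : Fin k, (A j).indicator (fun _ => (1:ℝ)) ω) ≤ (1 - δ) * p * k}
      ≤ ENNReal.ofReal (Real.exp (-(5/18 * δ^2 * p * k))) := by
  classical
  set Y : Fin k → Ω → ℝ := fun j => (A j).indicator (fun _ => (1:ℝ)) with hY
  have hYm : ∀ j, Measurable (Y j) := fun j => measurable_const.indicator (hA j)
  have hindf : iIndepFun Y μ := hind.iIndepFun_indicator
  set t : ℝ := -δ with ht
  have hpt : ∀ j ω, Real.exp (t * Y j ω) = 1 + (Real.exp t - 1) * Y j ω := by
    intro j ω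
    by_cases h : ω ∈ A j
    · simp [hY, Set.indicator_of_mem h]
    · simp [hY, Set.indicator_of_notMem h]
  have hYint : ∀ j, Integrable (Y j) μ := fun j => (integrable_const (1:ℝ)).indicator (hA j)
  have hintj : ∀ j, Integrable (fun ω => Real.exp (t * Y j ω)) μ := by
    intro j
    have : Integrable (fun ω => 1 + (Real.exp t - 1) * Y j ω) μ :=
      (integrable_const 1).add ((hYint j).const_mul _)
    exact this.congr (Filter.Eventually.of_forall (fun ω => (hpt j ω).symm))
  have hEY : ∀ j, ∫ ω, Y j ω ∂μ = p := by
    intro j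
    have h1 : ∫ ω, Y j ω ∂μ = (μ (A j)).toReal := by
      simp only [hY]
      exact MeasureTheory.integral_indicator_one (hA j)
    rw [h1, hp j, ENNReal.toReal_ofReal hp0]
  have hmgf : ∀ j, mgf (Y j) μ t = 1 + (Real.exp t - 1) * p := by
    intro j
    rw [mgf]
    rw [integral_congr_ae (Filter.Eventually.of_forall (hpt j))]
    rw [integral_add (integrable_const 1) ((hYint j).const_mul _), MeasureTheory.integral_const_mul,
      integral_const, hEY j]
    simp
  have hint_sum : Integrable (fun ω => Real.exp (t * (∑ j : Fin k, Y j) ω)) μ :=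
    hindf.integrable_exp_mul_sum hYm (fun j _ => hintj j)
  have hchern := measure_le_le_exp_mul_mgf (μ := μ) (X := ∑ j : Fin k, Y j)
    ((1 - δ) * p * k) (le_of_lt (by linarith : t < 0)) hint_sum
  rw [hindf.mgf_sum hYm Finset.univ] at hchern
  have hprod : ∏ j : Fin k, mgf (Y j) μ t = (1 + (Real.exp t - 1) * p) ^ k := by
    rw [Finset.prod_congr rfl (fun j _ => hmgf j), Finset.prod_const, Finset.card_univ,
      Fintype.card_fin]
  rw [hprod] at hchern
  -- bound the right-hand side
  have hbase0 : 0 ≤ 1 + (Real.exp t - 1) * p := by nlinarith [Real.exp_pos t]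
  have hbase : 1 + (Real.exp t - 1) * p ≤ Real.exp ((Real.exp t - 1) * p) := by
    have := Real.add_one_le_exp ((Real.exp t - 1) * p)
    linarith
  have hpow : (1 + (Real.exp t - 1) * p) ^ k ≤ Real.exp ((Real.exp t - 1) * p * k) := by
    calc (1 + (Real.exp t - 1) * p) ^ k ≤ (Real.exp ((Real.exp t - 1) * p)) ^ k :=
          pow_le_pow_left₀ hbase0 hbase k
      _ = Real.exp ((Real.exp t - 1) * p * k) := by
          rw [← Real.exp_nat_mul]; ring_nf
  have hrhs : Real.exp (-t * ((1 - δ) * p * k)) * (1 + (Real.exp t - 1) * p) ^ k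
      ≤ Real.exp (-(5/18 * δ^2 * p * k)) := by
    calc Real.exp (-t * ((1 - δ) * p * k)) * (1 + (Real.exp t - 1) * p) ^ k
        ≤ Real.exp (-t * ((1 - δ) * p * k)) * Real.exp ((Real.exp t - 1) * p * k) := by
          exact mul_le_mul_of_nonneg_left hpow (Real.exp_nonneg _)
      _ = Real.exp (-t * ((1 - δ) * p * k) + (Real.exp t - 1) * p * k) := by
          rw [← Real.exp_add]
      _ ≤ Real.exp (-(5/18 * δ^2 * p * k)) := by
          apply Real.exp_le_exp.2
          have hkey := cbc_exp_quad hδ0 hδ1.le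
          have hpk : (0:ℝ) ≤ p * k := by positivity
          have : -t * ((1 - δ) * p * k) + (Real.exp t - 1) * p * k
              = (δ * (1 - δ) + Real.exp (-δ) - 1) * (p * k) := by
            rw [ht]; ring
          rw [this]
          calc (δ * (1 - δ) + Real.exp (-δ) - 1) * (p * k)
              ≤ (-(5/18) * δ^2) * (p * k) := mul_le_mul_of_nonneg_right hkey hpk
            _ = -(5/18 * δ^2 * p * k) := by ring
  have htR := hchern.trans hrhs
  have hset : {ω | (∑ j : Fin k, Y j) ω ≤ (1 - δ) * p * k}
      = {ω | (∑ j : Fin k, Y j ω) ≤ (1 - δ) * p * k} := by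
    ext ω; simp [Finset.sum_apply]
  rw [hset] at htR
  calc μ {ω | (∑ j : Fin k, Y j ω) ≤ (1 - δ) * p * k}
      = ENNReal.ofReal (μ {ω | (∑ j : Fin k, Y j ω) ≤ (1 - δ) * p * k}).toReal :=
        (ENNReal.ofReal_toReal (measure_ne_top μ _)).symm
    _ ≤ ENNReal.ofReal (Real.exp (-(5/18 * δ^2 * p * k))) := ENNReal.ofReal_le_ofReal htR

/-- converged block count, Lemma 4 conditional form: there is `c > 0` such
that for all `λ > 0`, `Δ ≥ 0`, and i.i.d. exponential(λ) random variables
`X₁, …, X_{n+1}` (indexed by `Fin (n+1)`), with `η = e^{−2λΔ}` and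
`Y_i = 𝟙{X_i ≥ 2Δ ∧ X_{i+1} ≥ 2Δ}` for `i ∈ {1, …, n}`, `Y = Σ_i Y_i`, we have for every
`0 < δ < 1` that `P(Y ≤ (1−δ)·η²·n) ≤ 2·exp(−c·δ²·η²·n)`. -/
theorem converged_block_count :
    ∃ c : ℝ, 0 < c ∧
      ∀ (lam Δ : ℝ), 0 < lam → 0 ≤ Δ →
      ∀ (n : ℕ) (Ω : Type) (mΩ : MeasurableSpace Ω) (μ : Measure Ω),
        IsProbabilityMeasure μ →
      ∀ (X : Fin (n + 1) → Ω → ℝ),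
        (∀ i, Measurable (X i)) →
        iIndepFun X μ →
        (∀ i, μ.map (X i) = expMeasure lam) →
        ∀ δ : ℝ, 0 < δ → δ < 1 →
          μ {ω | ∑ i : Fin n,
                (if 2 * Δ ≤ X i.castSucc ω ∧ 2 * Δ ≤ X i.succ ω then (1 : ℝ) else 0) ≤
                (1 - δ) * Real.exp (-(2 * lam * Δ)) ^ 2 * n}
            ≤ ENNReal.ofReal
                (2 * Real.exp (-(c * δ ^ 2 * Real.exp (-(2 * lam * Δ)) ^ 2 * n))) := by
  classical
  refine ⟨5/72, by norm_num, ?_⟩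
  intro lam Δ hlam hΔ n Ω mΩ μ hμ X hXm hX hmap δ hδ0 hδ1
  set η := Real.exp (-(2 * lam * Δ)) with hη
  set p := η ^ 2 with hp
  have hη0 : 0 < η := Real.exp_pos _
  have hη1 : η ≤ 1 := Real.exp_le_one_iff.2 (by nlinarith)
  have hp0 : 0 ≤ p := by positivity
  have hp1 : p ≤ 1 := by nlinarith
  have hδsq : δ^2 ≤ 1 := by nlinarith
  set B : Fin (n+1) → Set Ω := fun i => X i ⁻¹' Set.Ici (2*Δ) with hB
  set A : Fin n → Set Ω := fun i => B i.castSucc ∩ B i.succ with hA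
  have hBm : ∀ i, MeasurableSet (B i) := fun i => (hXm i) measurableSet_Ici
  have hAm : ∀ i, MeasurableSet (A i) := fun i => (hBm _).inter (hBm _)
  have hμB : ∀ i, μ (B i) = ENNReal.ofReal η := by
    intro i
    have harg : lam * (2*Δ) = 2*lam*Δ := by ring
    rw [show μ (B i) = μ.map (X i) (Set.Ici (2*Δ)) from
        (Measure.map_apply (hXm i) measurableSet_Ici).symm, hmap i,
      cbc_expMeasure_Ici hlam (by linarith : (0:ℝ) ≤ 2*Δ), harg]
  have key : ∀ S : Finset (Fin (n+1)), μ (⋂ i ∈ S, B i) = ∏ i ∈ S, μ (B i) :=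
    fun S => hX.meas_biInter (fun i _ => ⟨Set.Ici (2*Δ), measurableSet_Ici, rfl⟩)
  have hμA : ∀ i, μ (A i) = ENNReal.ofReal p := by
    intro i
    have hne : i.castSucc ≠ i.succ := by
      intro h
      have := congrArg Fin.val h
      simp [Fin.val_succ] at this
    have h1 : (⋂ j ∈ ({i.castSucc, i.succ} : Finset (Fin (n+1))), B j)
        = B i.castSucc ∩ B i.succ := by
      simp [Set.biInter_insert]
    have h2 := key ({i.castSucc, i.succ} : Finset (Fin (n+1)))
    rw [h1, Finset.prod_insert (by simpa using hne), Finset.prod_singleton,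
      hμB, hμB, ← ENNReal.ofReal_mul hη0.le] at h2
    rw [hA]
    rw [h2, hp, sq]
  -- pointwise identification of the summands with indicators
  have hf : ∀ (i : Fin n) (ω : Ω),
      (if 2 * Δ ≤ X i.castSucc ω ∧ 2 * Δ ≤ X i.succ ω then (1 : ℝ) else 0)
        = (A i).indicator (fun _ => (1:ℝ)) ω := by
    intro i ω
    by_cases h : 2 * Δ ≤ X i.castSucc ω ∧ 2 * Δ ≤ X i.succ ω
    · rw [if_pos h, Set.indicator_of_mem (by exact ⟨h.1, h.2⟩)]
    · rw [if_neg h, Set.indicator_of_notMem (by simpa [hA, hB, Set.mem_inter_iff] using h)]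
  rcases lt_or_ge n 2 with hn2 | hn2
  -- small n : the bound is trivial
  · have hn1 : (n:ℝ) ≤ 1 := by exact_mod_cast Nat.lt_succ_iff.mp hn2
    have hn0 : (0:ℝ) ≤ (n:ℝ) := Nat.cast_nonneg n
    have hx0 : 0 ≤ 5/72 * δ^2 * p * n := by positivity
    have hδp : δ^2 * p ≤ 1 := by nlinarith [sq_nonneg δ]
    have hδpn : δ^2 * p * n ≤ 1 := by
      nlinarith [mul_nonneg (mul_nonneg (sq_nonneg δ) hp0) hn0, mul_nonneg (sq_nonneg δ) hp0]
    have hxle : 5/72 * δ^2 * p * n ≤ 5/72 := by nlinarith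
    have hexp : (1:ℝ) ≤ 2 * Real.exp (-(5/72 * δ^2 * p * n)) := by
      have h1 := Real.add_one_le_exp (-(5/72 * δ^2 * p * n))
      nlinarith
    calc μ _ ≤ 1 := prob_le_one
      _ ≤ ENNReal.ofReal (2 * Real.exp (-(5/72 * δ^2 * p * n))) := by
          rw [ENNReal.one_le_ofReal]; exact hexp
  -- main case
  · set m1 := n / 2 with hm1
    set m0 := n - m1 with hm0
    have hm0n : ∀ j : Fin m0, 2 * (j:ℕ) < n := by intro j; have := j.isLt; omega
    have hm1n : ∀ j : Fin m1, 2 * (j:ℕ) + 1 < n := by intro j; have := j.isLt; omega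
    set g0 : Fin m0 → Fin n := fun j => ⟨2 * j, hm0n j⟩ with hg0
    set g1 : Fin m1 → Fin n := fun j => ⟨2 * j + 1, hm1n j⟩ with hg1
    have hsep0 : ∀ j l : Fin m0, j ≠ l → (g0 j : ℕ) + 2 ≤ (g0 l : ℕ) ∨ (g0 l : ℕ) + 2 ≤ (g0 j : ℕ) := by
      intro j l hjl
      have : (j:ℕ) ≠ (l:ℕ) := fun h => hjl (Fin.ext h)
      simp only [hg0]
      omega
    have hsep1 : ∀ j l : Fin m1, j ≠ l → (g1 j : ℕ) + 2 ≤ (g1 l : ℕ) ∨ (g1 l : ℕ) + 2 ≤ (g1 j : ℕ) := by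
      intro j l hjl
      have : (j:ℕ) ≠ (l:ℕ) := fun h => hjl (Fin.ext h)
      simp only [hg1]
      omega
    have hind0 : iIndepSet (fun j => A (g0 j)) μ := cbc_iIndepSet_pairs hXm hX (2*Δ) g0 hsep0
    have hind1 : iIndepSet (fun j => A (g1 j)) μ := cbc_iIndepSet_pairs hXm hX (2*Δ) g1 hsep1
    have hc0 := cbc_chernoff μ (fun j => A (g0 j)) (fun j => hAm _) hind0 p hp0 hp1
      (fun j => hμA _) δ hδ0 hδ1
    have hc1 := cbc_chernoff μ (fun j => A (g1 j)) (fun j => hAm _) hind1 p hp0 hp1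
      (fun j => hμA _) δ hδ0 hδ1
    -- the sum over all indices dominates the two partial sums
    have hsub : ∀ ω : Ω,
        (∑ j : Fin m0, (A (g0 j)).indicator (fun _ => (1:ℝ)) ω)
          + (∑ j : Fin m1, (A (g1 j)).indicator (fun _ => (1:ℝ)) ω)
        ≤ ∑ i : Fin n, (A i).indicator (fun _ => (1:ℝ)) ω := by
      intro ω
      have hinj0 : ∀ x ∈ Finset.univ, ∀ y ∈ Finset.univ, g0 x = g0 y → x = y := by
        intro x _ y _ h
        have := congrArg Fin.val h
        simp only [hg0] at this
        exact Fin.ext (by omega)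
      have hinj1 : ∀ x ∈ Finset.univ, ∀ y ∈ Finset.univ, g1 x = g1 y → x = y := by
        intro x _ y _ h
        have := congrArg Fin.val h
        simp only [hg1] at this
        exact Fin.ext (by omega)
      have h0 : (∑ j : Fin m0, (A (g0 j)).indicator (fun _ => (1:ℝ)) ω)
          = ∑ i ∈ Finset.univ.image g0, (A i).indicator (fun _ => (1:ℝ)) ω :=
        (Finset.sum_image (f := fun i => (A i).indicator (fun _ => (1:ℝ)) ω) hinj0).symm
      have h1 : (∑ j : Fin m1, (A (g1 j)).indicator (fun _ => (1:ℝ)) ω)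
          = ∑ i ∈ Finset.univ.image g1, (A i).indicator (fun _ => (1:ℝ)) ω :=
        (Finset.sum_image (f := fun i => (A i).indicator (fun _ => (1:ℝ)) ω) hinj1).symm
      have hdisjEF : Disjoint (Finset.univ.image g0) (Finset.univ.image g1) := by
        rw [Finset.disjoint_left]
        rintro i hi0 hi1
        obtain ⟨j, -, rfl⟩ := Finset.mem_image.1 hi0
        obtain ⟨l, -, hl⟩ := Finset.mem_image.1 hi1
        have := congrArg Fin.val hl
        simp only [hg0, hg1] at this
        omega
      rw [h0, h1, ← Finset.sum_union hdisjEF]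
      exact Finset.sum_le_sum_of_subset_of_nonneg (Finset.subset_univ _)
        (fun i _ _ => Set.indicator_nonneg (fun _ _ => zero_le_one) _)
    have hcast : (m0:ℝ) + (m1:ℝ) = (n:ℝ) := by
      have : m0 + m1 = n := by omega
      exact_mod_cast congrArg (Nat.cast : ℕ → ℝ) this
    have hincl : {ω | ∑ i : Fin n,
          (if 2 * Δ ≤ X i.castSucc ω ∧ 2 * Δ ≤ X i.succ ω then (1 : ℝ) else 0) ≤
          (1 - δ) * p * n}
        ⊆ {ω | (∑ j : Fin m0, (A (g0 j)).indicator (fun _ => (1:ℝ)) ω) ≤ (1 - δ) * p * m0}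
          ∪ {ω | (∑ j : Fin m1, (A (g1 j)).indicator (fun _ => (1:ℝ)) ω) ≤ (1 - δ) * p * m1} := by
      intro ω hω
      simp only [Set.mem_setOf_eq] at hω
      rw [Finset.sum_congr rfl (fun i _ => hf i ω)] at hω
      by_contra h
      simp only [Set.mem_union, Set.mem_setOf_eq, not_or, not_le] at h
      have := hsub ω
      rw [← hcast] at hω
      nlinarith [h.1, h.2]
    have hmono := (measure_mono (μ := μ) hincl).trans (measure_union_le _ _)
    have hstep := hmono.trans (add_le_add hc0 hc1)
    -- numeric comparison of exponents
    have h4m1 : (n:ℝ) ≤ 4 * (m1:ℝ) := by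
      have : n ≤ 4 * m1 := by omega
      exact_mod_cast this
    have h4m0 : (n:ℝ) ≤ 4 * (m0:ℝ) := by
      have : n ≤ 4 * m0 := by omega
      exact_mod_cast this
    have hfac : (0:ℝ) ≤ δ^2 * p := by positivity
    have hexp0 : Real.exp (-(5/18 * δ^2 * p * m0)) ≤ Real.exp (-(5/72 * δ^2 * p * n)) := by
      apply Real.exp_le_exp.2
      have h : δ^2 * p * (n:ℝ) ≤ δ^2 * p * (4*(m0:ℝ)) := mul_le_mul_of_nonneg_left h4m0 hfac
      apply neg_le_neg
      calc 5/72*δ^2*p*(n:ℝ) = 5/72*(δ^2 * p * (n:ℝ)) := by ring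
        _ ≤ 5/72*(δ^2 * p * (4*(m0:ℝ))) := by linarith
        _ = 5/18*δ^2*p*(m0:ℝ) := by ring
    have hexp1 : Real.exp (-(5/18 * δ^2 * p * m1)) ≤ Real.exp (-(5/72 * δ^2 * p * n)) := by
      apply Real.exp_le_exp.2
      have h : δ^2 * p * (n:ℝ) ≤ δ^2 * p * (4*(m1:ℝ)) := mul_le_mul_of_nonneg_left h4m1 hfac
      apply neg_le_neg
      calc 5/72*δ^2*p*(n:ℝ) = 5/72*(δ^2 * p * (n:ℝ)) := by ring
        _ ≤ 5/72*(δ^2 * p * (4*(m1:ℝ))) := by linarith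
        _ = 5/18*δ^2*p*(m1:ℝ) := by ring
    calc μ {ω | ∑ i : Fin n,
          (if 2 * Δ ≤ X i.castSucc ω ∧ 2 * Δ ≤ X i.succ ω then (1 : ℝ) else 0) ≤
          (1 - δ) * p * n}
        ≤ ENNReal.ofReal (Real.exp (-(5/18 * δ^2 * p * m0)))
            + ENNReal.ofReal (Real.exp (-(5/18 * δ^2 * p * m1))) := hstep
      _ = ENNReal.ofReal (Real.exp (-(5/18 * δ^2 * p * m0))
            + Real.exp (-(5/18 * δ^2 * p * m1))) :=
          (ENNReal.ofReal_add (Real.exp_nonneg _) (Real.exp_nonneg _)).symm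
      _ ≤ ENNReal.ofReal (2 * Real.exp (-(5/72 * δ^2 * p * n))) := by
          apply ENNReal.ofReal_le_ofReal
          linarith
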